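/- arXiv:2002.09639 — 3 statements merged into one kernel-verified Lean document; each statement's English description precedes it below -/
import Mathlib

section
/- (Matsumura's lemma) Let C₀ > 0, C₁ ≥ 0, p > 1, q > 1, t₀ ≥ 2, and suppose Φ : [t₀,∞) → ℝ is differentiable and satisfies Φ'(t) ≤ −(C₀/t)|Φ(t)|^p + C₁/t^q for all t ≥ t₀. Then for all t ≥ t₀, Φ(t) ≤ C₂/(log t)^{p*−1}, where p* = p/(p−1) is the Hölder conjugate of p and C₂ = (1/log 2)·( (log t₀)^{p*} Φ(t₀) + C₁ ∫₂^∞ (log τ)^{p*} τ^{−q} dτ ) + (p*/(C₀ p))^{p*−1}. -/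
open Real Set MeasureTheory


private lemma aux_antitone {f f' : ℝ → ℝ} {a : ℝ}
    (hf : ∀ t ∈ Ici a, HasDerivAt f (f' t) t)
    (h0 : ∀ t ∈ Ioi a, f' t ≤ 0) : AntitoneOn f (Ici a) := by
  apply antitoneOn_of_deriv_nonpos (convex_Ici a)
  · exact fun x hx => (hf x hx).continuousAt.continuousWithinAt
  · intro x hx
    rw [interior_Ici] at hx
    exact ((hf x (mem_Ici.2 (le_of_lt hx))).differentiableAt).differentiableWithinAt
  · intro x hx
    rw [interior_Ici] at hx
    rw [(hf x (mem_Ici.2 (le_of_lt hx))).deriv]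
    exact h0 x hx

private lemma aux_rpow_anti {a b e : ℝ} (ha : 0 < a) (hab : a ≤ b) (he : e ≤ 0) :
    b ^ e ≤ a ^ e := by
  rw [show e = -(-e) by ring, Real.rpow_neg (le_of_lt ha), Real.rpow_neg (by linarith)]
  exact inv_anti₀ (Real.rpow_pos_of_pos ha _)
    (Real.rpow_le_rpow ha.le hab (by linarith))

private lemma aux_gain {C₀ C₁ p q : ℝ} {Φ Φ' : ℝ → ℝ} (hC₀ : 0 < C₀) (hC₁ : 0 ≤ C₁)
    (hq : 1 < q) {s : ℝ} (hs : 2 ≤ s)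
    (hderiv : ∀ t ≥ s, HasDerivAt Φ (Φ' t) t)
    (hineq : ∀ t ≥ s, Φ' t ≤ -(C₀ / t) * |Φ t| ^ p + C₁ / t ^ q) :
    ∀ t ≥ s, Φ t ≤ Φ s + C₁ * s ^ (1 - q) / (q - 1) := by
  have hq1 : (0:ℝ) < q - 1 := by linarith
  have hmain : AntitoneOn (fun t => Φ t + C₁ * t ^ (1 - q) / (q - 1)) (Ici s) := by
    apply aux_antitone (f' := fun t => Φ' t + C₁ * ((1 - q) * t ^ (1 - q - 1)) / (q - 1))
    · intro t ht
      have ht0 : (0:ℝ) < t := lt_of_lt_of_le (by linarith) ht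
      exact (hderiv t ht).add
        ((((Real.hasDerivAt_rpow_const (p := 1 - q) (Or.inl ht0.ne')).const_mul C₁).div_const
          (q - 1)))
    · intro t ht
      have hts : s ≤ t := le_of_lt ht
      have ht0 : (0:ℝ) < t := lt_of_lt_of_le (by linarith) hts
      have h1 : C₁ * ((1 - q) * t ^ (1 - q - 1)) / (q - 1) = -(C₁ / t ^ q) := by
        rw [show (1 - q - 1 : ℝ) = -q by ring, Real.rpow_neg ht0.le]
        field_simp
        ring
      rw [h1]
      have h2 := hineq t hts
      have h3 : 0 ≤ (C₀ / t) * |Φ t| ^ p := by positivity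
      linarith
  intro t ht
  have ht0 : (0:ℝ) < t := lt_of_lt_of_le (by linarith) ht
  have := hmain self_mem_Ici ht ht
  have h4 : 0 ≤ C₁ * t ^ (1 - q) / (q - 1) := by positivity
  simp only at this
  linarith

private lemma aux_young {C₀ p L x : ℝ} (hC₀ : 0 < C₀) (hp : 1 < p) (hL : 0 < L) :
    p / (p - 1) * L ^ (p / (p - 1) - 1) * x ≤
      C₀ * L ^ (p / (p - 1)) * |x| ^ p + (p / (p - 1) / (C₀ * p)) ^ (p / (p - 1) - 1) := by
  set σ := p / (p - 1) with hσdef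
  have hp1 : (0:ℝ) < p - 1 := by linarith
  have hp0 : (0:ℝ) < p := by linarith
  have hσ1 : 1 < σ := by rw [hσdef, lt_div_iff₀ hp1]; linarith
  have hσ0 : (0:ℝ) < σ := by linarith
  have hσp : σ / p = σ - 1 := by rw [hσdef]; field_simp; ring
  have hCp : 0 < C₀ * p := by positivity
  have hpq : p.HolderConjugate σ := Real.HolderConjugate.conjExponent hp
  have ha : 0 ≤ (C₀ * p) ^ (1/p) * L ^ (σ - 1) * |x| := by positivity
  have hb : 0 ≤ σ * ((C₀ * p) ^ (1/p))⁻¹ := by positivity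
  have key := Real.young_inequality_of_nonneg ha hb hpq
  have hCpow : ((C₀ * p) ^ (1/p)) ^ p = C₀ * p := by
    rw [← Real.rpow_mul hCp.le, one_div, inv_mul_cancel₀ hp0.ne', Real.rpow_one]
  have hx1 : ((C₀ * p) ^ (1/p)) ≠ 0 := by positivity
  have e1 : (C₀ * p) ^ (1/p) * L ^ (σ - 1) * |x| * (σ * ((C₀ * p) ^ (1/p))⁻¹)
      = σ * L ^ (σ - 1) * |x| := by field_simp
  have e2 : ((C₀ * p) ^ (1/p) * L ^ (σ - 1) * |x|) ^ p / p = C₀ * L ^ σ * |x| ^ p := by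
    rw [Real.mul_rpow (by positivity) (abs_nonneg x),
      Real.mul_rpow (by positivity) (by positivity), hCpow,
      ← Real.rpow_mul hL.le, show (σ - 1) * p = σ by rw [← hσp]; field_simp]
    field_simp
  have e3 : (σ * ((C₀ * p) ^ (1/p))⁻¹) ^ σ / σ = (σ / (C₀ * p)) ^ (σ - 1) := by
    rw [Real.mul_rpow hσ0.le (inv_nonneg.2 (by positivity)),
      Real.inv_rpow (by positivity), ← Real.rpow_mul hCp.le,
      show 1/p * σ = σ - 1 by rw [← hσp]; ring,
      Real.div_rpow hσ0.le hCp.le, Real.rpow_sub hσ0 σ 1, Real.rpow_one]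
    field_simp
  rw [e1, e2, e3] at key
  have h0 : σ * L ^ (σ - 1) * x ≤ σ * L ^ (σ - 1) * |x| := by
    have : 0 ≤ σ * L ^ (σ - 1) := by positivity
    exact mul_le_mul_of_nonneg_left (le_abs_self x) this
  linarith

private lemma aux_lower {C₀ C₁ p q t₀ : ℝ} {Φ Φ' : ℝ → ℝ}
    (hC₀ : 0 < C₀) (hC₁ : 0 ≤ C₁) (hp : 1 < p) (hq : 1 < q) (ht₀ : 2 ≤ t₀)
    (hderiv : ∀ t ≥ t₀, HasDerivAt Φ (Φ' t) t)
    (hineq : ∀ t ≥ t₀, Φ' t ≤ -(C₀ / t) * |Φ t| ^ p + C₁ / t ^ q) :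
    -(C₁ * t₀ ^ (1 - q) / (q - 1)) ≤ Φ t₀ := by
  by_contra hcon
  push_neg at hcon
  have hq1 : (0:ℝ) < q - 1 := by linarith
  have ht₀0 : (0:ℝ) < t₀ := by linarith
  set J := C₁ * t₀ ^ (1 - q) / (q - 1) with hJdef
  have hJ0 : 0 ≤ J := by rw [hJdef]; positivity
  set δ := -(Φ t₀ + J) with hδdef
  have hδ0 : 0 < δ := by rw [hδdef]; linarith
  -- Step 1 : Φ stays below -δ
  have hstep1 : ∀ t ≥ t₀, Φ t ≤ -δ := by
    intro t ht
    have h := aux_gain hC₀ hC₁ hq ht₀ hderiv hineq t ht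
    simp only [hδdef, hJdef]; linarith
  -- Step 2 : logarithmic decay
  have hstep2 : ∀ t ≥ t₀, Φ t ≤ -δ - C₀ * δ ^ p * (Real.log t - Real.log t₀) := by
    have hanti : AntitoneOn
        (fun t => Φ t + C₁ * t ^ (1 - q) / (q - 1) + C₀ * δ ^ p * Real.log t) (Ici t₀) := by
      apply aux_antitone (f' := fun t =>
        Φ' t + C₁ * ((1 - q) * t ^ (1 - q - 1)) / (q - 1) + C₀ * δ ^ p * t⁻¹)
      · intro t ht
        have ht0 : (0:ℝ) < t := lt_of_lt_of_le ht₀0 ht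
        exact ((hderiv t ht).add
          (((Real.hasDerivAt_rpow_const (p := 1 - q) (Or.inl ht0.ne')).const_mul C₁).div_const
            (q - 1))).add ((Real.hasDerivAt_log ht0.ne').const_mul (C₀ * δ ^ p))
      · intro t ht
        have hts : t₀ ≤ t := le_of_lt ht
        have ht0 : (0:ℝ) < t := lt_of_lt_of_le ht₀0 hts
        have h1 : C₁ * ((1 - q) * t ^ (1 - q - 1)) / (q - 1) = -(C₁ / t ^ q) := by
          rw [show (1 - q - 1 : ℝ) = -q by ring, Real.rpow_neg ht0.le]
          field_simp
          ring
        rw [h1]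
        have h2 := hineq t hts
        have h3 : δ ^ p ≤ |Φ t| ^ p := by
          apply Real.rpow_le_rpow hδ0.le _ (by linarith)
          have h := hstep1 t hts
          rw [abs_of_neg (by linarith : Φ t < 0)]
          linarith
        have h4 : C₀ * δ ^ p * t⁻¹ ≤ C₀ / t * |Φ t| ^ p := by
          rw [div_eq_mul_inv]
          calc C₀ * δ ^ p * t⁻¹ ≤ C₀ * |Φ t| ^ p * t⁻¹ :=
                mul_le_mul_of_nonneg_right (mul_le_mul_of_nonneg_left h3 hC₀.le) (by positivity)
            _ = C₀ * t⁻¹ * |Φ t| ^ p := by ring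
        linarith
    intro t ht
    have h5 := hanti self_mem_Ici ht ht
    simp only at h5
    have ht0 : (0:ℝ) < t := lt_of_lt_of_le ht₀0 ht
    have h6 : 0 ≤ C₁ * t ^ (1 - q) / (q - 1) := by positivity
    simp only [hδdef, hJdef]
    linarith
  -- Step 3 : the big constant D
  set D := max 1 ((2 * C₁ * t₀ ^ (1 - q) / C₀) ^ (1 / p)) with hDdef
  have hD1 : (1:ℝ) ≤ D := le_max_left _ _
  have hD0 : (0:ℝ) < D := by linarith
  have hDp : C₁ * t₀ ^ (1 - q) ≤ C₀ / 2 * D ^ p := by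
    have hbase : (0:ℝ) ≤ 2 * C₁ * t₀ ^ (1 - q) / C₀ := by positivity
    have h8 : 2 * C₁ * t₀ ^ (1 - q) / C₀ ≤ D ^ p := by
      calc 2 * C₁ * t₀ ^ (1 - q) / C₀
          = ((2 * C₁ * t₀ ^ (1 - q) / C₀) ^ (1 / p)) ^ p := by
            rw [← Real.rpow_mul hbase, one_div,
              inv_mul_cancel₀ (by linarith : p ≠ 0), Real.rpow_one]
        _ ≤ D ^ p := Real.rpow_le_rpow (by positivity) (le_max_right _ _) (by linarith)
    calc C₁ * t₀ ^ (1 - q) = C₀ / 2 * (2 * C₁ * t₀ ^ (1 - q) / C₀) := by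
          field_simp
      _ ≤ C₀ / 2 * D ^ p := mul_le_mul_of_nonneg_left h8 (by positivity)
  -- Step 4 : pick s far out
  set M := (D + J) / (C₀ * δ ^ p) with hMdef
  have hM0 : 0 ≤ M := by rw [hMdef]; positivity
  set s := t₀ * Real.exp M with hsdef
  have hs2 : t₀ ≤ s := by
    rw [hsdef]
    nth_rewrite 1 [← mul_one t₀]
    exact mul_le_mul_of_nonneg_left (Real.one_le_exp hM0) ht₀0.le
  have hs2' : (2:ℝ) ≤ s := le_trans ht₀ hs2
  have hs0 : (0:ℝ) < s := by linarith
  have hΦs : Φ s ≤ -(D + J) := by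
    have h := hstep2 s hs2
    rw [hsdef, Real.log_mul ht₀0.ne' (Real.exp_ne_zero M), Real.log_exp] at h
    have h9 : C₀ * δ ^ p * M = D + J := by
      rw [hMdef]
      field_simp
    have h10 : C₀ * δ ^ p * (Real.log t₀ + M - Real.log t₀) = D + J := by
      rw [show Real.log t₀ + M - Real.log t₀ = M by ring, h9]
    rw [hsdef]
    linarith
  -- Step 5 : Φ ≤ -D beyond s
  have hΦD : ∀ t ≥ s, Φ t ≤ -D := by
    intro t ht
    have h := aux_gain hC₀ hC₁ hq hs2' (fun u hu => hderiv u (le_trans hs2 hu))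
      (fun u hu => hineq u (le_trans hs2 hu)) t ht
    have hJs : C₁ * s ^ (1 - q) / (q - 1) ≤ J := by
      rw [hJdef]
      have h11 : s ^ (1 - q) ≤ t₀ ^ (1 - q) := aux_rpow_anti ht₀0 hs2 (by linarith)
      gcongr
    linarith
  -- Step 6 : blow-up comparison, contradiction
  have hkey : ∀ t ≥ s, Φ' t ≤ -(C₀ / 2) * (-Φ t) ^ p / t := by
    intro t ht
    have hts : t₀ ≤ t := le_trans hs2 ht
    have ht0 : (0:ℝ) < t := lt_of_lt_of_le ht₀0 hts
    have hD' : D ≤ -Φ t := by linarith [hΦD t ht]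
    have hΦneg : Φ t < 0 := by linarith
    have habs : |Φ t| = -Φ t := abs_of_neg hΦneg
    have h2 := hineq t hts
    have e : C₁ * t ^ (1 - q) / t = C₁ / t ^ q := by
      rw [Real.rpow_sub ht0, Real.rpow_one]
      have htq : (0:ℝ) < t ^ q := Real.rpow_pos_of_pos ht0 q
      field_simp
    have hC₁t : C₁ / t ^ q ≤ C₀ / 2 * (-Φ t) ^ p / t := by
      rw [← e]
      have h11 : t ^ (1 - q) ≤ t₀ ^ (1 - q) := aux_rpow_anti ht₀0 hts (by linarith)
      have h12 : D ^ p ≤ (-Φ t) ^ p := Real.rpow_le_rpow hD0.le hD' (by linarith)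
      have h13 : C₁ * t ^ (1 - q) ≤ C₀ / 2 * (-Φ t) ^ p := by
        calc C₁ * t ^ (1 - q) ≤ C₁ * t₀ ^ (1 - q) := mul_le_mul_of_nonneg_left h11 hC₁
          _ ≤ C₀ / 2 * D ^ p := hDp
          _ ≤ C₀ / 2 * (-Φ t) ^ p := mul_le_mul_of_nonneg_left h12 (by positivity)
      gcongr
    have e2 : -(C₀ / t) * (-Φ t) ^ p + C₀ / 2 * (-Φ t) ^ p / t
        = -(C₀ / 2) * (-Φ t) ^ p / t := by ring
    rw [habs] at h2
    linarith
  have hanti2 : AntitoneOn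
      (fun t => (-Φ t) ^ (1 - p) + (p - 1) * (C₀ / 2) * Real.log t) (Ici s) := by
    apply aux_antitone (f' := fun t =>
      -Φ' t * (1 - p) * (-Φ t) ^ (1 - p - 1) + (p - 1) * (C₀ / 2) * t⁻¹)
    · intro t ht
      have hts : t₀ ≤ t := le_trans hs2 ht
      have ht0 : (0:ℝ) < t := lt_of_lt_of_le ht₀0 hts
      have hu0 : (0:ℝ) < -Φ t := by linarith [hΦD t ht]
      exact (((hderiv t hts).neg).rpow_const (Or.inl hu0.ne')).add
        ((Real.hasDerivAt_log ht0.ne').const_mul ((p - 1) * (C₀ / 2)))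
    · intro t ht
      have hts : s ≤ t := le_of_lt ht
      have ht0 : (0:ℝ) < t := lt_of_lt_of_le (by linarith) hts
      have hu0 : (0:ℝ) < -Φ t := by linarith [hΦD t hts, hD0]
      have hk := hkey t hts
      have hpow : (0:ℝ) < (-Φ t) ^ (1 - p - 1) := Real.rpow_pos_of_pos hu0 _
      have h14 : -Φ' t * (1 - p) * (-Φ t) ^ (1 - p - 1)
          = (p - 1) * (-Φ t) ^ (1 - p - 1) * Φ' t := by ring
      have h15 : (p - 1) * (-Φ t) ^ (1 - p - 1) * Φ' t
          ≤ (p - 1) * (-Φ t) ^ (1 - p - 1) * (-(C₀ / 2) * (-Φ t) ^ p / t) := by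
        exact mul_le_mul_of_nonneg_left hk (mul_nonneg (by linarith) hpow.le)
      have h16 : (p - 1) * (-Φ t) ^ (1 - p - 1) * (-(C₀ / 2) * (-Φ t) ^ p / t)
          = -((p - 1) * (C₀ / 2) * t⁻¹) := by
        rw [show (1 - p - 1 : ℝ) = -p by ring, Real.rpow_neg hu0.le]
        have hup : (0:ℝ) < (-Φ t) ^ p := Real.rpow_pos_of_pos hu0 p
        field_simp
      rw [h14] at *
      linarith [h15, h16.le, h16.ge]
  obtain ⟨B, hBdef⟩ : ∃ B, B = (-Φ s) ^ (1 - p) + (p - 1) * (C₀ / 2) * Real.log s := ⟨_, rfl⟩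
  obtain ⟨T, hTdef⟩ : ∃ T, T = max s (Real.exp ((B + 1) * (2 / ((p - 1) * C₀)))) := ⟨_, rfl⟩
  have hsT : s ≤ T := hTdef ▸ le_max_left _ _
  have hT0 : (0:ℝ) < T := by linarith
  have h17 := hanti2 self_mem_Ici hsT hsT
  simp only at h17
  have hlogT : (B + 1) * (2 / ((p - 1) * C₀)) ≤ Real.log T :=
    (Real.le_log_iff_exp_le hT0).2 (hTdef ▸ le_max_right _ _)
  have h18 : (p - 1) * (C₀ / 2) * ((B + 1) * (2 / ((p - 1) * C₀))) = B + 1 := by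
    have hpc : ((p - 1) * C₀) ≠ 0 := ne_of_gt (mul_pos (by linarith) hC₀)
    have hp1' : p - 1 ≠ 0 := by linarith
    field_simp
  have h19 : (p - 1) * (C₀ / 2) * ((B + 1) * (2 / ((p - 1) * C₀)))
      ≤ (p - 1) * (C₀ / 2) * Real.log T :=
    mul_le_mul_of_nonneg_left hlogT (mul_nonneg (by linarith) (by positivity))
  have h20 : (0:ℝ) ≤ (-Φ T) ^ (1 - p) := by
    have hu0 : (0:ℝ) < -Φ T := by linarith [hΦD T hsT, hD0]
    positivity
  rw [← hBdef] at h17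
  linarith

private lemma aux_cont {σ q : ℝ} : ∀ x ∈ Ioi (1:ℝ),
    ContinuousAt (fun τ : ℝ => (Real.log τ) ^ σ / τ ^ q) x := by
  intro x hx
  have hx1 : (1:ℝ) < x := hx
  have hx0 : (0:ℝ) < x := by linarith
  have hlx : Real.log x ≠ 0 := ne_of_gt (Real.log_pos hx1)
  have h1 : ContinuousAt (fun τ : ℝ => (Real.log τ) ^ σ) x :=
    (Real.continuousAt_rpow_const _ _ (Or.inl hlx)).comp (Real.continuousAt_log hx0.ne')
  have h2 : ContinuousAt (fun τ : ℝ => τ ^ q) x :=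
    Real.continuousAt_rpow_const _ _ (Or.inl hx0.ne')
  exact h1.div h2 (ne_of_gt (Real.rpow_pos_of_pos hx0 q))

private lemma aux_integrable {σ q : ℝ} (hσ : 0 ≤ σ) (hq : 1 < q) :
    IntegrableOn (fun τ : ℝ => (Real.log τ) ^ σ / τ ^ q) (Ioi 2) := by
  set ε := (q - 1) / (2 * (σ + 1)) with hεdef
  have hε : 0 < ε := by rw [hεdef]; exact div_pos (by linarith) (by positivity)
  have hεσ : ε * σ ≤ (q - 1) / 2 := by
    rw [hεdef, div_mul_eq_mul_div, div_le_div_iff₀ (by positivity) (by norm_num)]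
    nlinarith
  have hmeas : AEStronglyMeasurable (fun τ : ℝ => (Real.log τ) ^ σ / τ ^ q)
      (volume.restrict (Ioi 2)) := by
    apply ContinuousOn.aestronglyMeasurable _ measurableSet_Ioi
    intro x hx
    exact (aux_cont x (by simp only [mem_Ioi] at hx ⊢; linarith)).continuousWithinAt
  have hg : IntegrableOn (fun τ : ℝ => (ε ^ σ)⁻¹ * τ ^ ((q - 1) / 2 - q)) (Ioi 2) := by
    exact (integrableOn_Ioi_rpow_of_lt (by linarith) (by norm_num : (0:ℝ) < 2)).const_mul _
  apply hg.integrable.mono hmeas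
  rw [ae_restrict_iff' measurableSet_Ioi]
  apply ae_of_all
  intro τ hτ
  simp only [mem_Ioi] at hτ
  have hτ0 : (0:ℝ) < τ := by linarith
  have hτ1 : (1:ℝ) ≤ τ := by linarith
  have hτq : (0:ℝ) < τ ^ q := Real.rpow_pos_of_pos hτ0 q
  have l1 : Real.log τ ≤ τ ^ ε / ε := Real.log_le_rpow_div hτ0.le hε
  have l2 : (Real.log τ) ^ σ ≤ (τ ^ ε / ε) ^ σ :=
    Real.rpow_le_rpow (Real.log_nonneg hτ1) l1 hσ
  have l3 : (τ ^ ε / ε) ^ σ = (ε ^ σ)⁻¹ * τ ^ (ε * σ) := by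
    rw [Real.div_rpow (Real.rpow_nonneg hτ0.le ε) hε.le, ← Real.rpow_mul hτ0.le]
    ring
  have l4 : τ ^ (ε * σ) ≤ τ ^ ((q - 1) / 2) := Real.rpow_le_rpow_of_exponent_le hτ1 hεσ
  have lnum : (Real.log τ) ^ σ ≤ (ε ^ σ)⁻¹ * τ ^ ((q - 1) / 2) := by
    rw [l3] at l2
    calc (Real.log τ) ^ σ ≤ (ε ^ σ)⁻¹ * τ ^ (ε * σ) := l2
      _ ≤ (ε ^ σ)⁻¹ * τ ^ ((q - 1) / 2) :=
          mul_le_mul_of_nonneg_left l4 (inv_nonneg.2 (Real.rpow_nonneg hε.le σ))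
  have l5 : (Real.log τ) ^ σ / τ ^ q ≤ (ε ^ σ)⁻¹ * τ ^ ((q - 1) / 2 - q) := by
    rw [Real.rpow_sub hτ0]
    calc (Real.log τ) ^ σ / τ ^ q ≤ ((ε ^ σ)⁻¹ * τ ^ ((q - 1) / 2)) / τ ^ q := by gcongr
      _ = (ε ^ σ)⁻¹ * (τ ^ ((q - 1) / 2) / τ ^ q) := by ring
  have hfnn : 0 ≤ (Real.log τ) ^ σ / τ ^ q :=
    div_nonneg (Real.rpow_nonneg (Real.log_nonneg hτ1) σ) hτq.le
  have hgnn : 0 ≤ (ε ^ σ)⁻¹ * τ ^ ((q - 1) / 2 - q) :=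
    mul_nonneg (inv_nonneg.2 (Real.rpow_nonneg hε.le σ)) (Real.rpow_nonneg hτ0.le _)
  rw [Real.norm_eq_abs, Real.norm_eq_abs, abs_of_nonneg hfnn, abs_of_nonneg hgnn]
  exact l5

private lemma aux_int_lower {σ q t₀ : ℝ} (hσ : 0 ≤ σ) (hq : 1 < q) (ht₀ : 2 ≤ t₀) :
    (Real.log t₀) ^ σ * (t₀ ^ (1 - q) / (q - 1)) ≤
      ∫ τ in Ioi (2:ℝ), (Real.log τ) ^ σ / τ ^ q := by
  have ht₀0 : (0:ℝ) < t₀ := by linarith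
  have hint := aux_integrable hσ hq
  have hnn : ∀ τ ∈ Ioi (2:ℝ), 0 ≤ (Real.log τ) ^ σ / τ ^ q := by
    intro τ hτ
    simp only [mem_Ioi] at hτ
    exact div_nonneg (Real.rpow_nonneg (Real.log_nonneg (by linarith)) σ)
      (Real.rpow_nonneg (by linarith) q)
  have hsub : Ioi t₀ ⊆ Ioi (2:ℝ) := Ioi_subset_Ioi ht₀
  have hint' : IntegrableOn (fun τ : ℝ => (Real.log τ) ^ σ / τ ^ q) (Ioi t₀) :=
    hint.mono_set hsub
  have hintg : IntegrableOn (fun τ : ℝ => (Real.log t₀) ^ σ * τ ^ (-q)) (Ioi t₀) :=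
    (integrableOn_Ioi_rpow_of_lt (by linarith) ht₀0).const_mul _
  have h1 : (∫ τ in Ioi t₀, (Real.log t₀) ^ σ * τ ^ (-q)) ≤
      ∫ τ in Ioi t₀, (Real.log τ) ^ σ / τ ^ q := by
    apply setIntegral_mono_on hintg hint' measurableSet_Ioi
    intro τ hτ
    simp only [mem_Ioi] at hτ
    have hτ0 : (0:ℝ) < τ := by linarith
    rw [Real.rpow_neg hτ0.le, div_eq_mul_inv]
    apply mul_le_mul_of_nonneg_right _ (inv_nonneg.2 (Real.rpow_nonneg hτ0.le q))
    exact Real.rpow_le_rpow (Real.log_nonneg (by linarith))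
      (Real.log_le_log ht₀0 hτ.le) hσ
  have h2 : (∫ τ in Ioi t₀, (Real.log t₀) ^ σ * τ ^ (-q)) =
      (Real.log t₀) ^ σ * (t₀ ^ (1 - q) / (q - 1)) := by
    rw [MeasureTheory.integral_const_mul, integral_Ioi_rpow_of_lt (by linarith) ht₀0]
    congr 1
    rw [show (-q + 1 : ℝ) = 1 - q by ring]
    have h1q : q - 1 ≠ 0 := by linarith
    have h2q : 1 - q ≠ 0 := by linarith
    field_simp
    ring
  have h3 : (∫ τ in Ioi t₀, (Real.log τ) ^ σ / τ ^ q) ≤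
      ∫ τ in Ioi (2:ℝ), (Real.log τ) ^ σ / τ ^ q := by
    apply setIntegral_mono_set hint
    · exact (ae_restrict_iff' measurableSet_Ioi).2 (ae_of_all _ fun τ hτ => hnn τ hτ)
    · exact HasSubset.Subset.eventuallyLE hsub
  linarith

theorem stmt_4
    (C₀ C₁ p q t₀ : ℝ) (Φ Φ' : ℝ → ℝ)
    (hC₀ : 0 < C₀) (hC₁ : 0 ≤ C₁) (hp : 1 < p) (hq : 1 < q) (ht₀ : 2 ≤ t₀)
    (hderiv : ∀ t ≥ t₀, HasDerivAt Φ (Φ' t) t)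
    (hineq : ∀ t ≥ t₀, Φ' t ≤ -(C₀ / t) * |Φ t| ^ p + C₁ / t ^ q) :
    ∀ t ≥ t₀,
      Φ t ≤ ((1 / Real.log 2) * ((Real.log t₀) ^ (p / (p - 1)) * Φ t₀
          + C₁ * ∫ τ in Ioi (2:ℝ), (Real.log τ) ^ (p / (p - 1)) / τ ^ q)
        + (p / (p - 1) / (C₀ * p)) ^ (p / (p - 1) - 1))
        / (Real.log t) ^ (p / (p - 1) - 1) := by
  intro t ht
  set σ := p / (p - 1) with hσdef
  have hp1 : (0:ℝ) < p - 1 := by linarith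
  have hσ1 : 1 < σ := by rw [hσdef, lt_div_iff₀ hp1]; linarith
  have hσ0 : (0:ℝ) ≤ σ := by linarith
  have ht₀0 : (0:ℝ) < t₀ := by linarith
  have ht2 : (2:ℝ) ≤ t := le_trans ht₀ ht
  have ht0 : (0:ℝ) < t := by linarith
  have hlog2 : (0:ℝ) < Real.log 2 := Real.log_pos (by norm_num)
  have hlogt₀ : Real.log 2 ≤ Real.log t₀ := Real.log_le_log (by norm_num) ht₀
  have hlogt : Real.log 2 ≤ Real.log t := Real.log_le_log (by norm_num) ht2
  have hLpos : 0 < Real.log t := lt_of_lt_of_le hlog2 hlogt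
  have hLt₀pos : 0 < Real.log t₀ := lt_of_lt_of_le hlog2 hlogt₀
  set K := (σ / (C₀ * p)) ^ (σ - 1) with hKdef
  have hK0 : 0 ≤ K := Real.rpow_nonneg (by positivity) _
  set f := fun τ : ℝ => (Real.log τ) ^ σ / τ ^ q with hfdef
  set I := ∫ τ in Ioi (2:ℝ), f τ with hIdef
  -- the Grönwall-type estimate
  have hgron : ∀ u ≥ t₀, (Real.log u) ^ σ * Φ u ≤ (Real.log t₀) ^ σ * Φ t₀
      + K * (Real.log u - Real.log t₀) + C₁ * ∫ τ in t₀..u, f τ := by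
    have hanti : AntitoneOn (fun u => (Real.log u) ^ σ * Φ u - K * Real.log u
        - C₁ * ∫ τ in t₀..u, f τ) (Ici t₀) := by
      apply aux_antitone (f' := fun u => (u⁻¹ * σ * (Real.log u) ^ (σ - 1) * Φ u
        + (Real.log u) ^ σ * Φ' u) - K * u⁻¹ - C₁ * f u)
      · intro u hu
        have hu0 : (0:ℝ) < u := lt_of_lt_of_le ht₀0 hu
        have hu2 : (2:ℝ) ≤ u := le_trans ht₀ hu
        have hu1 : u ∈ Ioi (1:ℝ) := mem_Ioi.2 (by linarith)
        have hlu : Real.log u ≠ 0 :=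
          ne_of_gt (lt_of_lt_of_le hlog2 (Real.log_le_log (by norm_num) hu2))
        have d1 : HasDerivAt (fun v => (Real.log v) ^ σ)
            (u⁻¹ * σ * (Real.log u) ^ (σ - 1)) u :=
          (Real.hasDerivAt_log hu0.ne').rpow_const (Or.inl hlu)
        have d2 : HasDerivAt (fun v => (Real.log v) ^ σ * Φ v)
            (u⁻¹ * σ * (Real.log u) ^ (σ - 1) * Φ u + (Real.log u) ^ σ * Φ' u) u :=
          d1.mul (hderiv u hu)
        have d3 : HasDerivAt (fun v => ∫ τ in t₀..v, f τ) (f u) u := by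
          apply intervalIntegral.integral_hasDerivAt_right
          · apply ContinuousOn.intervalIntegrable
            intro x hx
            rw [uIcc_of_le hu] at hx
            exact (aux_cont x (mem_Ioi.2 (by linarith [hx.1]))).continuousWithinAt
          · exact ContinuousAt.stronglyMeasurableAtFilter isOpen_Ioi aux_cont u hu1
          · exact aux_cont u hu1
        exact (d2.sub ((Real.hasDerivAt_log hu0.ne').const_mul K)).sub (d3.const_mul C₁)
      · intro u hu'
        have hu : t₀ ≤ u := le_of_lt hu'
        have hu0 : (0:ℝ) < u := lt_of_lt_of_le ht₀0 hu
        have hu2 : (2:ℝ) ≤ u := le_trans ht₀ hu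
        have hLu : 0 < Real.log u :=
          lt_of_lt_of_le hlog2 (Real.log_le_log (by norm_num) hu2)
        have hyoung := aux_young (C₀ := C₀) (p := p) (L := Real.log u) (x := Φ u) hC₀ hp hLu
        rw [← hσdef, ← hKdef] at hyoung
        have hΦ' := hineq u hu
        have h1 : (Real.log u) ^ σ * Φ' u
            ≤ (Real.log u) ^ σ * (-(C₀ / u) * |Φ u| ^ p + C₁ / u ^ q) :=
          mul_le_mul_of_nonneg_left hΦ' (Real.rpow_nonneg hLu.le σ)
        have h2 : u⁻¹ * σ * (Real.log u) ^ (σ - 1) * Φ u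
            ≤ u⁻¹ * (C₀ * (Real.log u) ^ σ * |Φ u| ^ p + K) := by
          calc u⁻¹ * σ * (Real.log u) ^ (σ - 1) * Φ u
              = u⁻¹ * (σ * (Real.log u) ^ (σ - 1) * Φ u) := by ring
            _ ≤ u⁻¹ * (C₀ * (Real.log u) ^ σ * |Φ u| ^ p + K) :=
              mul_le_mul_of_nonneg_left hyoung (by positivity)
        have h3 : (Real.log u) ^ σ * (-(C₀ / u) * |Φ u| ^ p + C₁ / u ^ q)
            = -(u⁻¹ * (C₀ * (Real.log u) ^ σ * |Φ u| ^ p)) + C₁ * f u := by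
          simp only [hfdef]
          have huq : (0:ℝ) < u ^ q := Real.rpow_pos_of_pos hu0 q
          field_simp
        have h4 : u⁻¹ * (C₀ * (Real.log u) ^ σ * |Φ u| ^ p + K)
            = u⁻¹ * (C₀ * (Real.log u) ^ σ * |Φ u| ^ p) + K * u⁻¹ := by ring
        rw [h3] at h1
        rw [h4] at h2
        linarith
    intro u hu
    have h5 := hanti self_mem_Ici hu hu
    simp only [intervalIntegral.integral_same] at h5
    linarith
  -- nonnegativity of the combined constant
  have hIl : (Real.log t₀) ^ σ * (t₀ ^ (1 - q) / (q - 1)) ≤ I := aux_int_lower hσ0 hq ht₀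
  have hX : 0 ≤ (Real.log t₀) ^ σ * Φ t₀ + C₁ * I := by
    have h1 : -(C₁ * t₀ ^ (1 - q) / (q - 1)) ≤ Φ t₀ :=
      aux_lower hC₀ hC₁ hp hq ht₀ hderiv hineq
    have h2 := mul_le_mul_of_nonneg_left h1 (Real.rpow_nonneg hLt₀pos.le σ)
    have h3 := mul_le_mul_of_nonneg_left hIl hC₁
    have e : (Real.log t₀) ^ σ * -(C₁ * t₀ ^ (1 - q) / (q - 1))
        = -(C₁ * ((Real.log t₀) ^ σ * (t₀ ^ (1 - q) / (q - 1)))) := by ring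
    rw [e] at h2
    linarith
  -- bound the interval integral by I
  have hIub : (∫ τ in t₀..t, f τ) ≤ I := by
    rw [intervalIntegral.integral_of_le ht, hIdef]
    apply setIntegral_mono_set (hfdef ▸ aux_integrable hσ0 hq)
    · apply (ae_restrict_iff' measurableSet_Ioi).2
      apply ae_of_all
      intro τ hτ
      simp only [mem_Ioi] at hτ
      simp only [hfdef]
      exact div_nonneg (Real.rpow_nonneg (Real.log_nonneg (by linarith)) σ)
        (Real.rpow_nonneg (by linarith) q)
    · exact HasSubset.Subset.eventuallyLE (fun x hx => mem_Ioi.2 (by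
        simp only [mem_Ioc] at hx; linarith [hx.1]))
  -- put everything together
  have hmain := hgron t ht
  set X := (Real.log t₀) ^ σ * Φ t₀ + C₁ * I with hXdef
  set L := Real.log t with hLdef
  have hLσ1pos : 0 < L ^ (σ - 1) := Real.rpow_pos_of_pos hLpos _
  have hLσpos : 0 < L ^ σ := Real.rpow_pos_of_pos hLpos _
  have h6 : L ^ σ * Φ t ≤ X + K * L := by
    have h7 : C₁ * (∫ τ in t₀..t, f τ) ≤ C₁ * I := mul_le_mul_of_nonneg_left hIub hC₁
    have h8 : 0 ≤ K * Real.log t₀ := mul_nonneg hK0 hLt₀pos.le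
    simp only [hXdef]
    linarith
  have e : L ^ σ = L ^ (σ - 1) * L := by
    have h := Real.rpow_add_one hLpos.ne' (σ - 1)
    rw [show σ - 1 + 1 = σ by ring] at h
    exact h
  rw [le_div_iff₀ hLσ1pos]
  have hdiv : Φ t ≤ (X + K * L) / L ^ σ := by
    rw [le_div_iff₀ hLσpos]
    linarith [h6]
  calc Φ t * L ^ (σ - 1) ≤ ((X + K * L) / L ^ σ) * L ^ (σ - 1) :=
        mul_le_mul_of_nonneg_right hdiv hLσ1pos.le
    _ = (X + K * L) / L := by
        rw [e]
        field_simp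
    _ = X / L + K := by field_simp
    _ ≤ X / Real.log 2 + K := by gcongr
    _ = 1 / Real.log 2 * X + K := by ring
end

section
/- Suppose Φ : [t₀,∞) → [0,∞) is differentiable with Φ'(t) ≤ −Φ(t)²/t + C₁/t^q for t ≥ t₀ ≥ 2 with q > 1 and C₁ ≥ 0. Then Φ(t) ≤ M/log t for all t ≥ t₀, where M = (1/log 2)( (log t₀)² Φ(t₀) + C₁ ∫₂^∞ (log τ)² τ^{−q} dτ ) + 1. -/
open Real Set MeasureTheory

theorem stmt_11
    (C₁ q t₀ : ℝ) (Φ Φ' : ℝ → ℝ)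
    (hC₁ : 0 ≤ C₁) (hq : 1 < q) (ht₀ : 2 ≤ t₀)
    (hΦnonneg : ∀ t ≥ t₀, 0 ≤ Φ t)
    (hderiv : ∀ t ≥ t₀, HasDerivAt Φ (Φ' t) t)
    (hineq : ∀ t ≥ t₀, Φ' t ≤ -(Φ t) ^ 2 / t + C₁ / t ^ q) :
    ∀ t ≥ t₀,
      Φ t ≤ ((1 / Real.log 2) * ((Real.log t₀) ^ 2 * Φ t₀
          + C₁ * ∫ τ in Ioi (2:ℝ), (Real.log τ) ^ 2 / τ ^ q) + 1) / Real.log t := by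
  intro t ht
  set g : ℝ → ℝ := fun τ => (Real.log τ) ^ 2 / τ ^ q with hg
  have ht₀pos : (0:ℝ) < t₀ := by linarith
  have htpos : (0:ℝ) < t := by linarith
  have hl2 : (0:ℝ) < Real.log 2 := Real.log_pos (by norm_num)
  have hlt₀ : Real.log 2 ≤ Real.log t₀ := Real.log_le_log (by norm_num) ht₀
  have hlt : Real.log 2 ≤ Real.log t := Real.log_le_log (by norm_num) (le_trans ht₀ ht)
  have hltt₀ : Real.log t₀ ≤ Real.log t := Real.log_le_log ht₀pos ht
  -- continuity of g at positive points
  have hgcont : ∀ τ : ℝ, 0 < τ → ContinuousAt g τ := by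
    intro τ hτ
    have h1 : ContinuousAt (fun τ : ℝ => (Real.log τ) ^ 2) τ :=
      (Real.continuousAt_log hτ.ne').pow 2
    have h2 : ContinuousAt (fun τ : ℝ => τ ^ q) τ :=
      Real.continuousAt_rpow_const τ q (Or.inl hτ.ne')
    exact h1.div h2 ((Real.rpow_pos_of_pos hτ q).ne')
  have hgnonneg : ∀ τ : ℝ, 0 < τ → 0 ≤ g τ :=
    fun τ hτ => div_nonneg (sq_nonneg _) (Real.rpow_pos_of_pos hτ q).le
  -- integrability on Ioi 2
  have hgint : IntegrableOn g (Ioi (2:ℝ)) := by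
    set δ : ℝ := (q - 1) / 4 with hδ
    have hδpos : (0:ℝ) < δ := by simp only [hδ]; linarith
    have hexp : 2 * δ - q < -1 := by simp only [hδ]; linarith
    have hbig : IntegrableOn (fun τ : ℝ => (1 / δ ^ 2) * τ ^ (2 * δ - q)) (Ioi (2:ℝ)) :=
      (integrableOn_Ioi_rpow_of_lt hexp (by norm_num)).const_mul _
    refine hbig.mono' ?_ ?_
    · apply ContinuousOn.aestronglyMeasurable ?_ measurableSet_Ioi
      intro τ hτ
      exact (hgcont τ (by simp only [mem_Ioi] at hτ; linarith)).continuousWithinAt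
    · filter_upwards [ae_restrict_mem measurableSet_Ioi] with τ hτ
      simp only [mem_Ioi] at hτ
      have hτpos : (0:ℝ) < τ := by linarith
      rw [Real.norm_of_nonneg (hgnonneg τ hτpos)]
      have hlog : Real.log τ ≤ τ ^ δ / δ :=
        Real.log_le_rpow_div hτpos.le hδpos
      have hlognn : 0 ≤ Real.log τ := Real.log_nonneg (by linarith)
      have hsq : (Real.log τ) ^ 2 ≤ (τ ^ δ / δ) ^ 2 :=
        pow_le_pow_left₀ hlognn hlog 2
      have h1 : (τ ^ δ / δ) ^ 2 = (1 / δ ^ 2) * τ ^ (2 * δ) := by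
        rw [div_pow, ← Real.rpow_natCast (τ ^ δ) 2, ← Real.rpow_mul hτpos.le]
        push_cast
        ring_nf
      have h2 : τ ^ (2 * δ - q) = τ ^ (2 * δ) / τ ^ q := by
        rw [Real.rpow_sub hτpos]
      rw [hg]
      calc (Real.log τ) ^ 2 / τ ^ q ≤ ((1 / δ ^ 2) * τ ^ (2 * δ)) / τ ^ q := by
            apply div_le_div_of_nonneg_right ?_ (Real.rpow_pos_of_pos hτpos q).le
            · rw [← h1]; exact hsq
        _ = (1 / δ ^ 2) * τ ^ (2 * δ - q) := by rw [h2]; ring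
  have hInonneg : 0 ≤ ∫ τ in Ioi (2:ℝ), g τ := by
    apply setIntegral_nonneg measurableSet_Ioi
    intro τ hτ
    exact hgnonneg τ (by simp only [mem_Ioi] at hτ; linarith)
  -- interval integral on [t₀, t] bounded by integral over Ioi 2
  have hsub : Icc t₀ t ⊆ Ioi (0:ℝ) := fun x hx => lt_of_lt_of_le ht₀pos hx.1
  have hgcontOn : ∀ u, t₀ ≤ u → ContinuousOn g (Icc t₀ u) := by
    intro u hu x hx
    exact (hgcont x (lt_of_lt_of_le ht₀pos hx.1)).continuousWithinAt
  have hii : ∀ u, t₀ ≤ u → IntervalIntegrable g volume t₀ u := by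
    intro u hu
    exact (hgcontOn u hu).intervalIntegrable_of_Icc hu
  have hIbound : ∫ τ in t₀..t, g τ ≤ ∫ τ in Ioi (2:ℝ), g τ := by
    rw [intervalIntegral.integral_of_le ht]
    apply setIntegral_mono_set hgint
    · filter_upwards [ae_restrict_mem measurableSet_Ioi] with τ hτ
      exact hgnonneg τ (by simp only [mem_Ioi] at hτ; linarith)
    · exact Filter.Eventually.of_forall
        (fun x hx => mem_Ioi.mpr (lt_of_le_of_lt ht₀ hx.1))
  -- the auxiliary function H
  set H : ℝ → ℝ := fun u => (Real.log u) ^ 2 * Φ u - Real.log u - C₁ * ∫ τ in t₀..u, g τ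
    with hH
  -- derivative of H at points of [t₀, t]
  have hHderiv : ∀ u ∈ Icc t₀ t, HasDerivAt H
      ((2 * Real.log u * u⁻¹) * Φ u + (Real.log u) ^ 2 * Φ' u - u⁻¹ - C₁ * g u) u := by
    intro u hu
    have hupos : 0 < u := lt_of_lt_of_le ht₀pos hu.1
    have h1 : HasDerivAt (fun x => (Real.log x) ^ 2) (2 * Real.log u * u⁻¹) u := by
      have := ((Real.hasDerivAt_log hupos.ne').pow 2)
      simp at this
      exact this
    have h2 : HasDerivAt (fun x => (Real.log x) ^ 2 * Φ x)
        ((2 * Real.log u * u⁻¹) * Φ u + (Real.log u) ^ 2 * Φ' u) u :=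
      h1.mul (hderiv u hu.1)
    have h3 : HasDerivAt (fun x => ∫ τ in t₀..x, g τ) (g u) u := by
      apply intervalIntegral.integral_hasDerivAt_right (hii u hu.1)
      · exact ContinuousAt.stronglyMeasurableAtFilter isOpen_Ioi
          (fun x hx => hgcont x hx) u hupos
      · exact hgcont u hupos
    exact ((h2.sub (Real.hasDerivAt_log hupos.ne')).sub ((h3.const_mul C₁)))
  -- H is antitone on [t₀, t]
  have hHanti : AntitoneOn H (Icc t₀ t) := by
    apply antitoneOn_of_deriv_nonpos (convex_Icc t₀ t)
    · intro u hu
      exact (hHderiv u hu).continuousAt.continuousWithinAt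
    · intro u hu
      rw [interior_Icc] at hu
      exact (hHderiv u (Ioo_subset_Icc_self hu)).differentiableAt.differentiableWithinAt
    · intro u hu
      rw [interior_Icc] at hu
      have huI : u ∈ Icc t₀ t := Ioo_subset_Icc_self hu
      rw [(hHderiv u huI).deriv]
      have hupos : 0 < u := lt_of_lt_of_le ht₀pos huI.1
      have hut₀ : t₀ ≤ u := huI.1
      have hlognn : 0 ≤ Real.log u := Real.log_nonneg (by linarith)
      have hΦnn : 0 ≤ Φ u := hΦnonneg u hut₀
      have hkey : Φ' u ≤ -(Φ u) ^ 2 / u + C₁ / u ^ q := hineq u hut₀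
      have h4 : (Real.log u) ^ 2 * Φ' u ≤
          (Real.log u) ^ 2 * (-(Φ u) ^ 2 / u + C₁ / u ^ q) :=
        mul_le_mul_of_nonneg_left hkey (sq_nonneg _)
      have h5 : (Real.log u) ^ 2 * (C₁ / u ^ q) = C₁ * g u := by
        rw [hg]; ring
      have h6 : 2 * Real.log u * Φ u - (Real.log u) ^ 2 * (Φ u) ^ 2 ≤ 1 := by
        nlinarith [sq_nonneg (Real.log u * Φ u - 1)]
      have h7 : (2 * Real.log u * u⁻¹) * Φ u +
          (Real.log u) ^ 2 * (-(Φ u) ^ 2 / u) - u⁻¹ ≤ 0 := by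
        have : (2 * Real.log u * u⁻¹) * Φ u + (Real.log u) ^ 2 * (-(Φ u) ^ 2 / u) - u⁻¹
            = (2 * Real.log u * Φ u - (Real.log u) ^ 2 * (Φ u) ^ 2 - 1) / u := by
          field_simp; ring
        rw [this]
        apply div_nonpos_of_nonpos_of_nonneg _ hupos.le
        linarith
      nlinarith [mul_le_mul_of_nonneg_left hkey (sq_nonneg (Real.log u))]
  have hHt : H t ≤ H t₀ := hHanti ⟨le_refl t₀, ht⟩ ⟨ht, le_refl t⟩ ht
  have hHt₀ : H t₀ = (Real.log t₀) ^ 2 * Φ t₀ - Real.log t₀ := by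
    simp [hH, intervalIntegral.integral_same]
  -- main estimate
  set A : ℝ := (Real.log t₀) ^ 2 * Φ t₀ + C₁ * ∫ τ in Ioi (2:ℝ), g τ with hA
  have hAnn : 0 ≤ A := by
    have := hΦnonneg t₀ (le_refl t₀)
    have : 0 ≤ (Real.log t₀) ^ 2 * Φ t₀ := mul_nonneg (sq_nonneg _) this
    positivity
  have hmain : (Real.log t) ^ 2 * Φ t ≤ A + Real.log t := by
    have h1 : (Real.log t) ^ 2 * Φ t - Real.log t - C₁ * ∫ τ in t₀..t, g τ
        ≤ (Real.log t₀) ^ 2 * Φ t₀ - Real.log t₀ := by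
      rw [← hHt₀]; exact hHt
    have h2 : C₁ * ∫ τ in t₀..t, g τ ≤ C₁ * ∫ τ in Ioi (2:ℝ), g τ :=
      mul_le_mul_of_nonneg_left hIbound hC₁
    have hlt₀nn : 0 ≤ Real.log t₀ := by linarith
    simp only [hA]
    linarith
  -- conclude
  have hltpos : 0 < Real.log t := lt_of_lt_of_le hl2 hlt
  rw [le_div_iff₀ hltpos]
  have hstep : Real.log t * Φ t ≤ A / Real.log 2 + 1 := by
    have h3 : A ≤ (A / Real.log 2) * Real.log t := by
      rw [div_mul_eq_mul_div, le_div_iff₀ hl2]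
      exact mul_le_mul_of_nonneg_left hlt hAnn
    nlinarith [hmain, hltpos]
  calc Φ t * Real.log t = Real.log t * Φ t := by ring
    _ ≤ A / Real.log 2 + 1 := hstep
    _ = (1 / Real.log 2) * A + 1 := by ring
end

section
/- Suppose a nonnegative function P on the circle S¹ is given by a homogeneous cubic polynomial restricted to S¹, i.e., P(ω) = Σ_{j,k,l=0}^{2} C_{jkl} ω_j ω_k ω_l with ω₀ = −1 and (ω₁,ω₂) ∈ S¹, and P does not vanish identically and is not everywhere strictly positive. Then there exists λ with 0 < λ < 1/4 such that ∫₀^{2π} P(cos θ, sin θ)^{−2λ} dθ < ∞. -/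
open Real Set MeasureTheory

lemma myAnalyticCos (x : ℝ) : AnalyticAt ℝ Real.cos x := by
  have h1 : AnalyticAt ℂ Complex.cos (x : ℂ) := by
    have : AnalyticAt ℂ (fun z : ℂ => (Complex.exp (z * Complex.I) + Complex.exp (-z * Complex.I)) / 2) (x:ℂ) := by
      apply AnalyticAt.div
      · exact ((analyticAt_id.mul analyticAt_const).cexp).add (((analyticAt_id.neg).mul analyticAt_const).cexp)
      · exact analyticAt_const
      · norm_num
    exact this.congr (by filter_upwards with z; rw [Complex.cos])
  have h2 : AnalyticAt ℝ Complex.cos (x : ℂ) := h1.restrictScalars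
  have h3 : AnalyticAt ℝ (fun t : ℝ => Complex.reCLM (Complex.cos (Complex.ofRealCLM t))) x :=
    (Complex.reCLM.analyticAt _).comp (h2.comp (Complex.ofRealCLM.analyticAt x))
  exact h3.congr (by filter_upwards with t; simp [Complex.cos_ofReal_re])

lemma myAnalyticSin (x : ℝ) : AnalyticAt ℝ Real.sin x := by
  have h1 : AnalyticAt ℂ Complex.sin (x : ℂ) := by
    have : AnalyticAt ℂ (fun z : ℂ => (Complex.exp (-z * Complex.I) - Complex.exp (z * Complex.I)) * Complex.I / 2) (x:ℂ) := by
      apply AnalyticAt.div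
      · exact ((((analyticAt_id.neg).mul analyticAt_const).cexp).sub ((analyticAt_id.mul analyticAt_const).cexp)).mul analyticAt_const
      · exact analyticAt_const
      · norm_num
    exact this.congr (by filter_upwards with z; rw [Complex.sin])
  have h2 : AnalyticAt ℝ Complex.sin (x : ℂ) := h1.restrictScalars
  have h3 : AnalyticAt ℝ (fun t : ℝ => Complex.reCLM (Complex.sin (Complex.ofRealCLM t))) x :=
    (Complex.reCLM.analyticAt _).comp (h2.comp (Complex.ofRealCLM.analyticAt x))
  exact h3.congr (by filter_upwards with t; simp [Complex.sin_ofReal_re])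

lemma myLoc (f : ℝ → ℝ) (x : ℝ) (hA : AnalyticAt ℝ f x) (hnn : ∀ y, 0 ≤ f y)
    (hnz : ¬ ∀ᶠ y in nhds x, f y = 0) :
    ∃ n : ℕ, ∃ c : ℝ, 0 < c ∧ ∃ ε : ℝ, 0 < ε ∧
      ∀ y ∈ Metric.ball x ε, y ≠ x → c * |y - x| ^ (n : ℝ) ≤ f y := by
  by_cases hfx : f x = 0
  · have hord : analyticOrderAt f x ≠ ⊤ := by
      intro h; exact hnz (analyticOrderAt_eq_top.mp h)
    obtain ⟨n, hn⟩ := Option.ne_none_iff_exists'.mp hord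
    obtain ⟨g, hg, hg0, hev⟩ := hA.analyticOrderAt_eq_natCast (n := n).mp (by exact_mod_cast hn)
    have hgx : 0 < |g x| := abs_pos.mpr hg0
    have h2 : ∀ᶠ t in nhds (g x), |g x| / 2 < |t| := by
      have hopen : IsOpen {t : ℝ | |g x| / 2 < |t|} :=
        isOpen_lt continuous_const continuous_abs
      exact hopen.mem_nhds (by simpa using half_lt_self hgx)
    have hgc : ∀ᶠ y in nhds x, |g x| / 2 < |g y| := hg.continuousAt.eventually h2
    obtain ⟨ε, hε, hball⟩ := Metric.eventually_nhds_iff.mp (hev.and hgc)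
    refine ⟨n, |g x| / 2, by positivity, ε, hε, fun y hy hyx => ?_⟩
    obtain ⟨h1, h2'⟩ := hball (Metric.mem_ball.mp hy)
    have : f y = |y - x| ^ n * |g y| := by
      rw [← abs_of_nonneg (hnn y), h1, smul_eq_mul, abs_mul, abs_pow]
    rw [this, Real.rpow_natCast]
    calc |g x| / 2 * |y - x| ^ n ≤ |g y| * |y - x| ^ n := by
          apply mul_le_mul_of_nonneg_right h2'.le (by positivity)
      _ = |y - x| ^ n * |g y| := mul_comm _ _
  · have hfx' : 0 < f x := lt_of_le_of_ne (hnn x) (Ne.symm hfx)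
    have hgc : ∀ᶠ y in nhds x, f x / 2 < f y :=
      hA.continuousAt.eventually (Ioi_mem_nhds (half_lt_self hfx'))
    obtain ⟨ε, hε, hball⟩ := Metric.eventually_nhds_iff.mp hgc
    refine ⟨0, f x / 2, by positivity, ε, hε, fun y hy hyx => ?_⟩
    rw [Nat.cast_zero, Real.rpow_zero, mul_one]
    exact (hball (Metric.mem_ball.mp hy)).le

lemma myAbsInt (x ε r : ℝ) (hε : 0 < ε) (hr : -1 < r) :
    IntegrableOn (fun y : ℝ => |y - x| ^ r) (Metric.ball x ε) := by
  have hR : IntegrableOn (fun y : ℝ => (y - x) ^ r) (Ioc x (x + ε)) := by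
    have := (intervalIntegral.intervalIntegrable_rpow' (a := 0) (b := ε) hr).comp_sub_right x
    rw [intervalIntegrable_iff, zero_add, add_comm ε x, uIoc_of_le (by linarith)] at this
    exact this
  have hL : IntegrableOn (fun y : ℝ => (x - y) ^ r) (Ioc (x - ε) x) := by
    have := (intervalIntegral.intervalIntegrable_rpow' (a := 0) (b := ε) hr).comp_sub_left x
    rw [intervalIntegrable_iff] at this
    have huIoc : uIoc (x - 0) (x - ε) = Ioc (x - ε) x := by
      rw [uIoc_of_ge (by linarith)]; norm_num
    rwa [huIoc] at this
  have hRabs : IntegrableOn (fun y : ℝ => |y - x| ^ r) (Ioc x (x + ε)) := by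
    apply hR.congr_fun (fun y hy => ?_) measurableSet_Ioc
    rw [abs_of_nonneg (by simp only [mem_Ioc] at hy; linarith [hy.1])]
  have hLabs : IntegrableOn (fun y : ℝ => |y - x| ^ r) (Ioc (x - ε) x) := by
    apply hL.congr_fun (fun y hy => ?_) measurableSet_Ioc
    rw [abs_of_nonpos (by simp only [mem_Ioc] at hy; linarith [hy.2]), neg_sub]
  apply (hLabs.union hRabs).mono_set
  rw [Real.ball_eq_Ioo]
  intro y hy
  simp only [mem_Ioo] at hy
  rcases le_or_gt y x with h | h
  · exact mem_union_left _ (mem_Ioc.mpr ⟨hy.1, h⟩)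
  · exact mem_union_right _ (mem_Ioc.mpr ⟨h, hy.2.le⟩)

lemma myMeas (f : ℝ → ℝ) (t : ℝ) (ht : t ≠ 0) (hcont : Continuous f) (hnn : ∀ y, 0 ≤ f y) :
    Measurable fun y => f y ^ t := by
  have : (fun y => f y ^ t) = fun y =>
      if f y = 0 then 0 else Real.exp (Real.log (f y) * t) := by
    funext y
    by_cases h : f y = 0
    · simp [h, Real.zero_rpow ht]
    · rw [if_neg h, Real.rpow_def_of_pos (lt_of_le_of_ne (hnn y) (Ne.symm h))]
  rw [this]
  exact Measurable.ite (hcont.measurable (measurableSet_singleton 0))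
    measurable_const ((Real.measurable_log.comp hcont.measurable).mul_const t).exp

lemma myLocInt (f : ℝ → ℝ) (x c ε t r : ℝ) (hc : 0 < c) (hε : 0 < ε) (ht : t < 0)
    (hrt : -1 < r * t) (hcont : Continuous f) (hnn : ∀ y, 0 ≤ f y)
    (hb : ∀ y ∈ Metric.ball x ε, y ≠ x → c * |y - x| ^ r ≤ f y) :
    IntegrableOn (fun y => f y ^ t) (Metric.ball x ε) := by
  have hG : IntegrableOn (fun y : ℝ => c ^ t * |y - x| ^ (r * t)) (Metric.ball x ε) :=
    (myAbsInt x ε (r * t) hε hrt).const_mul _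
  refine Integrable.mono' hG ((myMeas f t ht.ne hcont hnn).aestronglyMeasurable.restrict) ?_
  have hx_ae : ∀ᵐ y : ℝ ∂(volume.restrict (Metric.ball x ε)), y ≠ x := by
    refine ae_restrict_of_ae ?_
    rw [ae_iff]
    convert Real.volume_singleton (a := x) using 2
    ext y; simp
  rw [ae_restrict_iff' Metric.isOpen_ball.measurableSet] at hx_ae ⊢
  filter_upwards [hx_ae] with y hy hyball
  have hyx : y ≠ x := hy hyball
  have habs : 0 < |y - x| := abs_pos.mpr (sub_ne_zero.mpr hyx)
  have hlow : 0 < c * |y - x| ^ r := by positivity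
  have h1 : f y ^ t ≤ (c * |y - x| ^ r) ^ t :=
    Real.rpow_le_rpow_of_nonpos hlow (hb y hyball hyx) ht.le
  have h2 : (c * |y - x| ^ r) ^ t = c ^ t * |y - x| ^ (r * t) := by
    rw [Real.mul_rpow hc.le (Real.rpow_nonneg (abs_nonneg _) r), ← Real.rpow_mul (abs_nonneg _)]
  rw [Real.norm_eq_abs, abs_of_nonneg (Real.rpow_nonneg (hnn y) t)]
  rw [← h2]; exact h1

theorem stmt_18
    (C : Fin 3 → Fin 3 → Fin 3 → ℝ)
    (P : ℝ → ℝ → ℝ)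
    (hP : ∀ ω₁ ω₂ : ℝ, P ω₁ ω₂ =
      ∑ j : Fin 3, ∑ k : Fin 3, ∑ l : Fin 3,
        C j k l * (![(-1:ℝ), ω₁, ω₂] j) * (![(-1:ℝ), ω₁, ω₂] k) * (![(-1:ℝ), ω₁, ω₂] l))
    (hnonneg : ∀ θ : ℝ, 0 ≤ P (Real.cos θ) (Real.sin θ))
    (hne : ¬ (∀ θ : ℝ, P (Real.cos θ) (Real.sin θ) = 0))
    (hnpos : ¬ (∀ θ : ℝ, 0 < P (Real.cos θ) (Real.sin θ))) :
    ∃ lam : ℝ, 0 < lam ∧ lam < 1/4 ∧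
      IntegrableOn (fun θ => P (Real.cos θ) (Real.sin θ) ^ (-(2*lam)))
        (Icc (0:ℝ) (2*π)) := by
  set f : ℝ → ℝ := fun θ => P (Real.cos θ) (Real.sin θ) with hfdef
  have hA : ∀ x : ℝ, AnalyticAt ℝ f x := by
    intro x
    have hv : ∀ j : Fin 3, AnalyticAt ℝ (fun θ : ℝ => ![(-1:ℝ), Real.cos θ, Real.sin θ] j) x := by
      intro j
      fin_cases j
      · simpa using (analyticAt_const : AnalyticAt ℝ (fun _ : ℝ => (-1:ℝ)) x)
      · simpa using myAnalyticCos x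
      · simpa using myAnalyticSin x
    have h1 : AnalyticAt ℝ (fun θ : ℝ => ∑ j : Fin 3, ∑ k : Fin 3, ∑ l : Fin 3,
        C j k l * (![(-1:ℝ), Real.cos θ, Real.sin θ] j) * (![(-1:ℝ), Real.cos θ, Real.sin θ] k)
          * (![(-1:ℝ), Real.cos θ, Real.sin θ] l)) x := by
      apply Finset.analyticAt_fun_sum; intro j _
      apply Finset.analyticAt_fun_sum; intro k _
      apply Finset.analyticAt_fun_sum; intro l _
      exact ((analyticAt_const.mul (hv j)).mul (hv k)).mul (hv l)
    exact h1.congr (Filter.Eventually.of_forall fun θ =>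
      (hP (Real.cos θ) (Real.sin θ)).symm)
  have hcont : Continuous f := continuous_iff_continuousAt.mpr fun x => (hA x).continuousAt
  have hnz : ∀ x : ℝ, ¬ ∀ᶠ y in nhds x, f y = 0 := by
    intro x hx
    apply hne
    intro θ
    have honU : AnalyticOnNhd ℝ f univ := fun y _ => hA y
    exact honU.eqOn_zero_of_preconnected_of_eventuallyEq_zero isPreconnected_univ
      (mem_univ x) hx (mem_univ θ)
  choose n c hc ε hε hb using fun x : ℝ => myLoc f x (hA x) hnonneg (hnz x)
  obtain ⟨S, hS⟩ := (isCompact_Icc (a := (0:ℝ)) (b := 2*π)).elim_nhds_subcover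
    (fun x => Metric.ball x (ε x)) (fun x _ => Metric.ball_mem_nhds x (hε x))
  set N : ℕ := S.sup n with hN
  set lam : ℝ := 1 / (8 * ((N:ℝ) + 1)) with hlam
  have hNpos : (0:ℝ) < 8 * ((N:ℝ) + 1) := by positivity
  have hlam0 : 0 < lam := by rw [hlam]; positivity
  have hlam4 : lam < 1/4 := by
    rw [hlam, div_lt_div_iff₀ hNpos (by norm_num)]
    nlinarith [Nat.cast_nonneg (α := ℝ) N]
  have hkey : ∀ m : ℕ, m ≤ N → -1 < (m:ℝ) * (-(2*lam)) := by
    intro m hm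
    have hm' : (m:ℝ) ≤ (N:ℝ) := Nat.cast_le.mpr hm
    have heq : (m:ℝ) * (-(2*lam)) = -((2*(m:ℝ)) / (8 * ((N:ℝ) + 1))) := by
      rw [hlam]; ring
    have hlt : (2*(m:ℝ)) / (8 * ((N:ℝ) + 1)) < 1 :=
      (div_lt_one hNpos).mpr (by nlinarith)
    rw [heq]; linarith
  refine ⟨lam, hlam0, hlam4, ?_⟩
  apply IntegrableOn.mono_set ?_ hS.2
  rw [integrableOn_finset_iUnion]
  intro x hx
  exact myLocInt f x (c x) (ε x) (-(2*lam)) ((n x : ℝ)) (hc x) (hε x) (by linarith)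
    (hkey (n x) (Finset.le_sup hx)) hcont hnonneg (hb x)
end
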